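/- Let Z be a convex subset of a real vector space V and p : V → [0,∞) a seminorm with p(x) ≤ a for all x ∈ Z. Then for all x, y ∈ Z, p(x - y) ≤ 2a·(1 - t_y(x)) ≤ 2a·(1 - b(y)). -/
import Mathlib


/-- The weight function `t_y(x) = sup{ t ∈ [0,1) : (y - t·x)/(1-t) ∈ Z }`. -/
noncomputable def weight {V : Type*} [AddCommGroup V] [Module ℝ V] (Z : Set V) (y x : V) : ℝ :=
  sSup {t : ℝ | 0 ≤ t ∧ t < 1 ∧ (1 - t)⁻¹ • (y - t • x) ∈ Z}

/-- The boundariness `b(y) = inf_{x ∈ Z} t_y(x)`. -/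
noncomputable def bdness {V : Type*} [AddCommGroup V] [Module ℝ V] (Z : Set V) (y : V) : ℝ :=
  sInf (weight Z y '' Z)

lemma weight_nonneg {V : Type*} [AddCommGroup V] [Module ℝ V] (Z : Set V) (y x : V)
    (hy : y ∈ Z) : 0 ≤ weight Z y x := by
  apply le_csSup
  · exact ⟨1, fun s hs => hs.2.1.le⟩
  · refine ⟨le_refl 0, one_pos, ?_⟩
    simpa using hy

theorem seminorm_le_of_weight {V : Type*} [AddCommGroup V] [Module ℝ V]
    (Z : Set V) (hZ : Convex ℝ Z) (p : Seminorm ℝ V) (a : ℝ)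
    (hpa : ∀ x ∈ Z, p x ≤ a)
    (x y : V) (hx : x ∈ Z) (hy : y ∈ Z) :
    p (x - y) ≤ 2 * a * (1 - weight Z y x) ∧
      2 * a * (1 - weight Z y x) ≤ 2 * a * (1 - bdness Z y) := by
  set S := {t : ℝ | 0 ≤ t ∧ t < 1 ∧ (1 - t)⁻¹ • (y - t • x) ∈ Z} with hS
  have hS0 : (0:ℝ) ∈ S := ⟨le_refl 0, one_pos, by simpa using hy⟩
  have hSbdd : BddAbove S := ⟨1, fun s hs => hs.2.1.le⟩
  have ha : 0 ≤ a := (apply_nonneg p x).trans (hpa x hx)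
  have hw0 : 0 ≤ weight Z y x := weight_nonneg Z y x hy
  have hw1 : weight Z y x ≤ 1 := csSup_le ⟨0, hS0⟩ (fun s hs => hs.2.1.le)
  -- key estimate
  have key : ∀ s ∈ S, p (x - y) ≤ 2 * a * (1 - s) := by
    rintro s ⟨hs0, hs1, hz⟩
    set z := (1 - s)⁻¹ • (y - s • x) with hzdef
    have hns : (1:ℝ) - s ≠ 0 := by linarith
    have h1 : (1 - s) • z = y - s • x := smul_inv_smul₀ hns _
    have heq : x - y = (1 - s) • (x - z) := by
      rw [smul_sub, h1]; module
    have hps : p (x - y) = (1 - s) * p (x - z) := by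
      rw [heq, map_smul_eq_mul, Real.norm_eq_abs, abs_of_pos (by linarith)]
    have hpz : p z ≤ a := hpa z hz
    have hpx : p x ≤ a := hpa x hx
    have hsub : p (x - z) ≤ p x + p z := map_sub_le_add p x z
    rw [hps]
    nlinarith [apply_nonneg p (x - z)]
  constructor
  · rcases eq_or_lt_of_le ha with rfl | hapos
    · have : p (x - y) ≤ p x + p y := map_sub_le_add p x y
      have := hpa x hx
      have := hpa y hy
      nlinarith [apply_nonneg p (x - y)]
    · have hle : weight Z y x ≤ 1 - p (x - y) / (2 * a) := by
        apply csSup_le ⟨0, hS0⟩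
        intro s hs
        have := key s hs
        rw [le_sub_iff_add_le, ← le_sub_iff_add_le', div_le_iff₀ (by linarith)]
        nlinarith
      have h2a : 0 < 2 * a := by linarith
      have h := (div_le_iff₀ h2a).mp (show p (x - y) / (2 * a) ≤ 1 - weight Z y x by linarith)
      nlinarith [h]
  · have hb : bdness Z y ≤ weight Z y x := by
      apply csInf_le
      · refine ⟨0, ?_⟩
        rintro _ ⟨x', hx', rfl⟩
        exact weight_nonneg Z y x' hy
      · exact ⟨x, hx, rfl⟩
    nlinarith
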